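/- For every integer n > 0, the sum over all weakly decreasing tuples (λ₁, λ₂, ..., λₙ) of nonnegative integers with λ₁ + λ₂ + ... + λₙ = n of the product C(λ₁,λ₂)·C(λ₂,λ₃)···C(λₙ₋₁,λₙ)·C(λₙ,0) equals 2^(n-1). -/

import Mathlib

open Finset

/-- Weakly decreasing tuples `(λ₁,…,λₙ)` of nonnegative integers with `λ₁+⋯+λₙ = n`. -/
def partitionTuples (n : ℕ) : Finset (Fin n → ℕ) :=
  (Finset.Nat.antidiagonalTuple n n).filter fun t => ∀ i j : Fin n, i ≤ j → t j ≤ t i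

/-- The product `C(λ₁,λ₂)·C(λ₂,λ₃)⋯C(λₙ,0)` with the convention `λ_{n+1} = 0`. -/
def binomProd (n : ℕ) (t : Fin n → ℕ) : ℕ :=
  ∏ i : Fin n, Nat.choose (t i) (if h : (i : ℕ) + 1 < n then t ⟨(i : ℕ) + 1, h⟩ else 0)

def D (L m : ℕ) : Finset (Fin L → ℕ) :=
  (Finset.Nat.antidiagonalTuple L m).filter fun t => ∀ i j : Fin L, i ≤ j → t j ≤ t i

def hd {L : ℕ} (s : Fin L → ℕ) : ℕ := if h : 0 < L then s ⟨0, h⟩ else 0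

lemma mem_D {L m : ℕ} {t : Fin L → ℕ} :
    t ∈ D L m ↔ (∑ i, t i) = m ∧ ∀ i j : Fin L, i ≤ j → t j ≤ t i := by
  simp [D, Finset.Nat.mem_antidiagonalTuple]

lemma hd_succ {L : ℕ} (t : Fin (L+1) → ℕ) : hd t = t 0 := by
  simp [hd]

lemma binomProd_succ {L : ℕ} (b : ℕ) (s : Fin L → ℕ) :
    binomProd (L+1) (Fin.cons b s) = Nat.choose b (hd s) * binomProd L s := by
  unfold binomProd
  rw [Fin.prod_univ_succ]
  congr 1
  · congr 1
    split_ifs with h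
    · have hL : 0 < L := by simpa using h
      have e : (⟨((0 : Fin (L+1)) : ℕ) + 1, h⟩ : Fin (L+1)) = Fin.succ ⟨0, hL⟩ := by
        ext; simp
      rw [e, Fin.cons_succ, hd, dif_pos hL]
    · have hL : ¬ 0 < L := by simpa using h
      rw [hd, dif_neg hL]
  · apply Finset.prod_congr rfl
    intro i _
    rw [Fin.cons_succ]
    congr 1
    split_ifs with h h' h'
    · have : (⟨((Fin.succ i : Fin (L+1)) : ℕ)+1, h⟩ : Fin (L+1))
        = Fin.succ ⟨(i:ℕ)+1, h'⟩ := rfl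
      rw [this, Fin.cons_succ]
    · exfalso; exact h' (by simpa using Nat.lt_of_succ_lt_succ h)
    · exfalso; exact h (by simpa using Nat.succ_lt_succ h')
    · rfl

lemma decr_cons {L : ℕ} {b : ℕ} {s : Fin L → ℕ} :
    (∀ i j : Fin (L+1), i ≤ j → (Fin.cons b s : Fin (L+1) → ℕ) j ≤ (Fin.cons b s : Fin (L+1) → ℕ) i) ↔
      ((∀ i j : Fin L, i ≤ j → s j ≤ s i) ∧ ∀ i : Fin L, s i ≤ b) := by
  constructor
  · intro h
    refine ⟨fun i j hij => ?_, fun i => ?_⟩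
    · have := h i.succ j.succ (by simpa using hij)
      simpa using this
    · have := h 0 i.succ (Fin.zero_le _)
      simpa using this
  · rintro ⟨h1, h2⟩ i j hij
    induction i using Fin.cases with
    | zero =>
      induction j using Fin.cases with
      | zero => exact le_refl _
      | succ j => simpa using h2 j
    | succ i =>
      induction j using Fin.cases with
      | zero =>
        have : (0 : Fin (L+1)) = i.succ := le_antisymm (Fin.zero_le _) hij
        rw [← this]
      | succ j =>
        have : i ≤ j := by simpa using hij
        simpa using h1 i j this

lemma choose_hd_eq_zero {L : ℕ} {b : ℕ} {s : Fin L → ℕ}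
    (hdec : ∀ i j : Fin L, i ≤ j → s j ≤ s i) (hb : ¬ ∀ i : Fin L, s i ≤ b) :
    Nat.choose b (hd s) = 0 := by
  push_neg at hb
  obtain ⟨i, hi⟩ := hb
  have hL : 0 < L := i.pos
  have : s i ≤ hd s := by
    rw [hd, dif_pos hL]
    exact hdec ⟨0, hL⟩ i (Fin.mk_le_of_le_val (Nat.zero_le _))
  exact Nat.choose_eq_zero_of_lt (lt_of_lt_of_le hi this)

lemma sum_D_succ (L m : ℕ) (f : ℕ → (Fin L → ℕ) → ℕ)
    (hf : ∀ b s, (∀ i j : Fin L, i ≤ j → s j ≤ s i) → ¬ (∀ i : Fin L, s i ≤ b) → f b s = 0) :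
    ∑ t ∈ D (L+1) m, f (t 0) (Fin.tail t)
      = ∑ bc ∈ Finset.HasAntidiagonal.antidiagonal m, ∑ s ∈ D L bc.2, f bc.1 s := by
  have step1 : ∑ t ∈ D (L+1) m, f (t 0) (Fin.tail t)
      = ∑ p ∈ (Finset.HasAntidiagonal.antidiagonal m).sigma
          (fun bc => (D L bc.2).filter fun s => ∀ i : Fin L, s i ≤ bc.1),
          f p.1.1 p.2 := by
    refine Finset.sum_nbij' (i := fun t => ⟨(t 0, ∑ i, Fin.tail t i), Fin.tail t⟩)
      (j := fun p => Fin.cons p.1.1 p.2) ?_ ?_ ?_ ?_ ?_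
    · intro t ht
      obtain ⟨hsum, hdec⟩ := mem_D.mp ht
      simp only [Finset.mem_sigma, Finset.HasAntidiagonal.mem_antidiagonal, Finset.mem_filter]
      refine ⟨?_, ⟨mem_D.mpr ⟨rfl, ?_⟩, ?_⟩⟩
      · rw [← hsum, Fin.sum_univ_succ]; rfl
      · intro i j hij
        exact hdec i.succ j.succ (by simpa using hij)
      · intro i
        have := hdec 0 i.succ (Fin.zero_le _)
        simpa [Fin.tail] using this
    · intro p hp
      simp only [Finset.mem_sigma, Finset.HasAntidiagonal.mem_antidiagonal, Finset.mem_filter] at hp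
      obtain ⟨hsum, hmem, hle⟩ := hp
      obtain ⟨hsum2, hdec⟩ := mem_D.mp hmem
      refine mem_D.mpr ⟨?_, decr_cons.mpr ⟨hdec, hle⟩⟩
      rw [Fin.sum_cons, hsum2, hsum]
    · intro t _; exact Fin.cons_self_tail t
    · intro p hp
      simp only [Finset.mem_sigma, Finset.HasAntidiagonal.mem_antidiagonal, Finset.mem_filter] at hp
      obtain ⟨hsum, hmem, _⟩ := hp
      obtain ⟨hsum2, _⟩ := mem_D.mp hmem
      obtain ⟨⟨b, c⟩, s⟩ := p
      simp only [Finset.HasAntidiagonal.mem_antidiagonal] at hsum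
      simp only at hsum2
      refine Sigma.ext ?_ ?_
      · simp only [Fin.cons_zero, Fin.tail_cons]
        rw [hsum2]
      · simp [Fin.tail_cons]
    · intro t _; rfl
  rw [step1, Finset.sum_sigma]
  apply Finset.sum_congr rfl
  intro bc _
  refine Finset.sum_filter_of_ne fun s hs hne => ?_
  by_contra hb
  exact hne (hf bc.1 s (mem_D.mp hs).2 hb)

def S (L a m : ℕ) : ℕ := ∑ t ∈ D L m, Nat.choose a (hd t) * binomProd L t

lemma S_zero_left (L m : ℕ) (hm : m ≠ 0) : S L 0 m = 0 := by
  apply Finset.sum_eq_zero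
  intro t ht
  obtain ⟨hsum, hdec⟩ := mem_D.mp ht
  rcases Nat.eq_zero_or_pos (hd t) with h0 | hpos
  · exfalso
    apply hm
    rw [← hsum]
    apply Finset.sum_eq_zero
    intro i _
    have hL : 0 < L := i.pos
    have : t i ≤ hd t := by
      rw [hd, dif_pos hL]
      exact hdec ⟨0, hL⟩ i (Fin.mk_le_of_le_val (Nat.zero_le _))
    omega
  · rw [Nat.choose_eq_zero_of_lt hpos, zero_mul]

lemma S_succ (L a m : ℕ) :
    S (L+1) a m = ∑ bc ∈ Finset.HasAntidiagonal.antidiagonal m, Nat.choose a bc.1 * S L bc.1 bc.2 := by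
  have h1 : S (L+1) a m = ∑ t ∈ D (L+1) m,
      (fun b (s : Fin L → ℕ) => Nat.choose a b * (Nat.choose b (hd s) * binomProd L s))
        (t 0) (Fin.tail t) := by
    apply Finset.sum_congr rfl
    intro t _
    have ht' : binomProd (L+1) t
        = Nat.choose (t 0) (hd (Fin.tail t)) * binomProd L (Fin.tail t) := by
      conv_lhs => rw [← Fin.cons_self_tail t]
      rw [binomProd_succ]
    simp only
    rw [hd_succ, ht']
  have hf : ∀ b (s : Fin L → ℕ), (∀ i j : Fin L, i ≤ j → s j ≤ s i) →
      ¬ (∀ i : Fin L, s i ≤ b) →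
      (fun b (s : Fin L → ℕ) => Nat.choose a b * (Nat.choose b (hd s) * binomProd L s)) b s
        = 0 := by
    intro b s hdec hb
    simp only
    rw [choose_hd_eq_zero hdec hb, zero_mul, mul_zero]
  rw [h1, sum_D_succ L m _ hf]
  apply Finset.sum_congr rfl
  intro bc _
  rw [S, Finset.mul_sum]

lemma S_val : ∀ L a m : ℕ, m ≤ L →
    S L a m = if m = 0 then 1 else (a + (m - 1)).choose m := by
  intro L
  induction L with
  | zero =>
    intro a m hm
    interval_cases m
    simp only [if_pos rfl]
    rw [S, D]
    rw [Finset.Nat.antidiagonalTuple_zero_zero]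
    rw [Finset.filter_true_of_mem (by intro x _; intro i; exact i.elim0)]
    rw [Finset.sum_singleton]
    simp [hd, binomProd]
  | succ L ih =>
    intro a m hm
    rcases Nat.eq_zero_or_pos m with rfl | hmpos
    · rw [S_succ]
      simp only [Finset.Nat.antidiagonal_zero, Finset.sum_singleton]
      rw [ih 0 0 (Nat.zero_le _)]
      simp
    · rw [if_neg hmpos.ne', S_succ]
      have hv : (a + (m - 1)).choose m
          = ∑ ij ∈ Finset.HasAntidiagonal.antidiagonal m, a.choose ij.1 * (m-1).choose ij.2 :=
        Nat.add_choose_eq a (m-1) m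
      rw [hv]
      apply Finset.sum_congr rfl
      intro bc hbc
      rw [Finset.HasAntidiagonal.mem_antidiagonal] at hbc
      rcases Nat.eq_zero_or_pos bc.1 with h0 | hbpos
      · have : bc.2 = m := by omega
        rw [h0, this, S_zero_left L m hmpos.ne',
          Nat.choose_eq_zero_of_lt (show m - 1 < m by omega)]
      · congr 1
        have hc : bc.2 ≤ L := by omega
        rw [ih bc.1 bc.2 hc]
        rcases Nat.eq_zero_or_pos bc.2 with h2 | hcpos
        · rw [if_pos h2, h2, Nat.choose_zero_right]
        · rw [if_neg hcpos.ne']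
          congr 1
          omega


lemma sum_binomProd_succ (L m : ℕ) : ∑ t ∈ D (L+1) m, binomProd (L+1) t
      = ∑ t ∈ D (L+1) m,
        (fun b (s : Fin L → ℕ) => Nat.choose b (hd s) * binomProd L s) (t 0) (Fin.tail t) := by
  apply Finset.sum_congr rfl
  intro t _
  simp only
  conv_lhs => rw [← Fin.cons_self_tail t]
  rw [binomProd_succ]

theorem stmt0 (n : ℕ) (hn : 0 < n) :
    ∑ t ∈ partitionTuples n, binomProd n t = 2 ^ (n - 1) := by
  obtain ⟨L, rfl⟩ : ∃ L, n = L + 1 := ⟨n - 1, by omega⟩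
  have hD : partitionTuples (L+1) = D (L+1) (L+1) := rfl
  rw [hD]
  have hf : ∀ b (s : Fin L → ℕ), (∀ i j : Fin L, i ≤ j → s j ≤ s i) →
      ¬ (∀ i : Fin L, s i ≤ b) →
      (fun b (s : Fin L → ℕ) => Nat.choose b (hd s) * binomProd L s) b s = 0 := by
    intro b s hdec hb
    simp only
    rw [choose_hd_eq_zero hdec hb, zero_mul]
  rw [sum_binomProd_succ L (L+1),
    sum_D_succ L (L+1) (fun b (s : Fin L → ℕ) => Nat.choose b (hd s) * binomProd L s) hf]
  have h2 : ∀ bc ∈ Finset.HasAntidiagonal.antidiagonal (L+1),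
      (∑ s ∈ D L bc.2, Nat.choose bc.1 (hd s) * binomProd L s) = Nat.choose L bc.2 := by
    rintro ⟨b, c⟩ hbc
    rw [Finset.HasAntidiagonal.mem_antidiagonal] at hbc
    simp only at hbc ⊢
    have heq : (∑ s ∈ D L c, Nat.choose b (hd s) * binomProd L s) = S L b c := rfl
    rw [heq]
    rcases Nat.eq_zero_or_pos b with h0 | hbpos
    · have hcv : c = L + 1 := by omega
      rw [h0, hcv, S_zero_left L (L+1) (by omega),
        Nat.choose_eq_zero_of_lt (show L < L + 1 by omega)]
    · have hc : c ≤ L := by omega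
      rw [S_val L b c hc]
      rcases Nat.eq_zero_or_pos c with hc0 | hcpos
      · rw [if_pos hc0, hc0, Nat.choose_zero_right]
      · rw [if_neg hcpos.ne']
        congr 1
        omega
  rw [Finset.sum_congr rfl h2]
  rw [Finset.Nat.sum_antidiagonal_eq_sum_range_succ_mk]
  simp only
  have h3 : ∑ k ∈ Finset.range (L+1+1), Nat.choose L (L+1-k)
      = ∑ k ∈ Finset.range (L+1+1), Nat.choose L k := by
    rw [← Finset.sum_range_reflect]
    apply Finset.sum_congr rfl
    intro k hk
    congr 1
    rw [Finset.mem_range] at hk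
    omega
  rw [h3, Finset.sum_range_succ, Nat.choose_eq_zero_of_lt (show L < L + 1 by omega), add_zero,
    Nat.sum_range_choose]
  simp
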